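/- Let n ≥ 1 and let K and L be real symmetric positive semidefinite n×n matrices with K ≠ 0 and L ≠ 0. Then, as λ → +∞, the normalized kernelized Ridge-CCA quantity Tr(K(K+nλI)⁻¹L(L+nλI)⁻¹) / √( Tr(K(K+nλI)⁻¹K(K+nλI)⁻¹) · Tr(L(L+nλI)⁻¹L(L+nλI)⁻¹) ) tends to Tr(K L) / √( Tr(K²) · Tr(L²) ). (For every λ > 0 the denominator is strictly positive, so the ratio is well defined.) -/

import Mathlib

open Matrix Filter

namespace Stmt17Aux

variable {n : ℕ}

lemma trace_sq_pos (B : Matrix (Fin n) (Fin n) ℝ) (hB : Bᵀ = B) (hB0 : B ≠ 0) :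
    0 < (B * B).trace := by
  have hsym : ∀ i j, B j i = B i j := fun i j => by
    conv_lhs => rw [← hB, Matrix.transpose_apply]
  have htr : (B * B).trace = ∑ i, ∑ j, B i j ^ 2 := by
    simp only [Matrix.trace, Matrix.diag_apply, Matrix.mul_apply, sq]
    exact Finset.sum_congr rfl fun i _ => Finset.sum_congr rfl fun j _ => by rw [hsym i j]
  obtain ⟨i, j, hij⟩ : ∃ i j, B i j ≠ 0 := by
    by_contra h
    push_neg at h
    exact hB0 (Matrix.ext fun i j => by simpa using h i j)
  rw [htr]
  have hi : 0 < ∑ jj, B i jj ^ 2 :=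
    Finset.sum_pos' (fun j _ => sq_nonneg _) ⟨j, Finset.mem_univ j, by positivity⟩
  exact Finset.sum_pos' (fun ii _ => Finset.sum_nonneg fun jj _ => sq_nonneg _)
    ⟨i, Finset.mem_univ i, hi⟩

lemma posdef_shift (A : Matrix (Fin n) (Fin n) ℝ) (hA : A.PosSemidef) {c : ℝ} (hc : 0 < c) :
    (A + c • 1).PosDef := by
  have h1 : (c • (1 : Matrix (Fin n) (Fin n) ℝ)).PosDef := by
    have : c • (1 : Matrix (Fin n) (Fin n) ℝ) = Matrix.diagonal fun _ => c := by
      ext i j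
      by_cases h : i = j <;> simp [Matrix.one_apply, Matrix.diagonal_apply, h]
    rw [this]
    exact Matrix.PosDef.diagonal fun _ => hc
  exact Matrix.PosDef.posSemidef_add hA h1

lemma transpose_eq (A : Matrix (Fin n) (Fin n) ℝ) (hA : A.PosSemidef) : Aᵀ = A := by
  have := hA.isHermitian.eq
  rwa [Matrix.conjTranspose_eq_transpose_of_trivial] at this

lemma scale_inv (A : Matrix (Fin n) (Fin n) ℝ) (hA : A.PosSemidef) {c : ℝ} (hc : 0 < c) :
    c • (A + c • 1)⁻¹ = (c⁻¹ • A + 1)⁻¹ := by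
  set M := A + c • 1 with hM
  have hdet : IsUnit M.det := (Matrix.isUnit_iff_isUnit_det M).mp (posdef_shift A hA hc).isUnit
  have hrw : c⁻¹ • A + 1 = c⁻¹ • M := by
    rw [hM, smul_add, smul_smul, inv_mul_cancel₀ hc.ne', one_smul]
  rw [hrw]
  refine (Matrix.inv_eq_left_inv ?_).symm
  rw [Matrix.smul_mul, Matrix.mul_smul, smul_smul, mul_inv_cancel₀ hc.ne', one_smul,
    Matrix.nonsing_inv_mul M hdet]

lemma comm_inv (A : Matrix (Fin n) (Fin n) ℝ) (hA : A.PosSemidef) {c : ℝ} (hc : 0 < c) :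
    A * (A + c • 1)⁻¹ = (A + c • 1)⁻¹ * A := by
  set M := A + c • 1 with hM
  have hdet : IsUnit M.det := (Matrix.isUnit_iff_isUnit_det M).mp (posdef_shift A hA hc).isUnit
  have hcomm : A * M = M * A := by
    rw [hM, mul_add, add_mul, Matrix.mul_smul, Matrix.smul_mul, mul_one, one_mul]
  calc A * M⁻¹ = 1 * A * M⁻¹ := by rw [one_mul]
    _ = M⁻¹ * M * A * M⁻¹ := by rw [Matrix.nonsing_inv_mul M hdet]
    _ = M⁻¹ * (M * A) * M⁻¹ := by rw [mul_assoc M⁻¹ M A]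
    _ = M⁻¹ * (A * M) * M⁻¹ := by rw [← hcomm]
    _ = M⁻¹ * A * (M * M⁻¹) := by simp only [mul_assoc]
    _ = M⁻¹ * A := by rw [Matrix.mul_nonsing_inv M hdet, mul_one]

lemma trace_pos (A : Matrix (Fin n) (Fin n) ℝ) (hA : A.PosSemidef) (hA0 : A ≠ 0) {c : ℝ}
    (hc : 0 < c) : 0 < (A * (A + c • 1)⁻¹ * A * (A + c • 1)⁻¹).trace := by
  set M := A + c • 1 with hM
  have hdet : IsUnit M.det := (Matrix.isUnit_iff_isUnit_det M).mp (posdef_shift A hA hc).isUnit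
  have hMt : M⁻¹ᵀ = M⁻¹ := by
    rw [Matrix.transpose_nonsing_inv]
    congr 1
    rw [hM, Matrix.transpose_add, transpose_eq A hA, Matrix.transpose_smul,
      Matrix.transpose_one]
  have hPt : (A * M⁻¹)ᵀ = A * M⁻¹ := by
    rw [Matrix.transpose_mul, hMt, transpose_eq A hA, ← comm_inv A hA hc]
  have hP0 : A * M⁻¹ ≠ 0 := by
    intro h
    apply hA0
    have h2 : A * M⁻¹ * M = 0 * M := by rw [h]
    rwa [mul_assoc, Matrix.nonsing_inv_mul M hdet, mul_one, zero_mul] at h2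
  have := trace_sq_pos (A * M⁻¹) hPt hP0
  rwa [← mul_assoc] at this

lemma tendsto_B (hn : 1 ≤ n) (A : Matrix (Fin n) (Fin n) ℝ) :
    Tendsto (fun lam : ℝ => (((n : ℝ) * lam)⁻¹ • A + 1)⁻¹) atTop
      (nhds (1 : Matrix (Fin n) (Fin n) ℝ)) := by
  have hnpos : (0 : ℝ) < n := by exact_mod_cast hn
  have h1 : Tendsto (fun lam : ℝ => (n : ℝ) * lam) atTop atTop :=
    Tendsto.const_mul_atTop hnpos tendsto_id
  have h2 : Tendsto (fun lam : ℝ => ((n : ℝ) * lam)⁻¹) atTop (nhds 0) :=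
    tendsto_inv_atTop_zero.comp h1
  have h3 : Tendsto (fun lam : ℝ => ((n : ℝ) * lam)⁻¹ • A + 1) atTop
      (nhds (1 : Matrix (Fin n) (Fin n) ℝ)) := by
    have := (h2.smul_const A).add_const (1 : Matrix (Fin n) (Fin n) ℝ)
    simpa using this
  have hcont : ContinuousAt (fun M : Matrix (Fin n) (Fin n) ℝ => M⁻¹) 1 := by
    have hfun : (fun M : Matrix (Fin n) (Fin n) ℝ => M⁻¹)
        = fun M => Ring.inverse M.det • M.adjugate := by
      funext M; rw [Matrix.inv_def]
    rw [hfun]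
    simp_rw [Ring.inverse_eq_inv']
    exact ((continuous_id.matrix_det.continuousAt).inv₀ (by simp)).smul
      (continuous_id.matrix_adjugate.continuousAt)
  have := hcont.tendsto.comp h3
  simpa [Function.comp_def] using this

end Stmt17Aux

theorem stmt_17 {n : ℕ} (hn : 1 ≤ n) (K L : Matrix (Fin n) (Fin n) ℝ)
    (hK : K.PosSemidef) (hL : L.PosSemidef) (hK0 : K ≠ 0) (hL0 : L ≠ 0) :
    (∀ lam : ℝ, 0 < lam →
      0 < Real.sqrt ((K * (K + (n * lam) • 1)⁻¹ * K * (K + (n * lam) • 1)⁻¹).trace *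
          (L * (L + (n * lam) • 1)⁻¹ * L * (L + (n * lam) • 1)⁻¹).trace)) ∧
    Tendsto (fun lam : ℝ =>
        (K * (K + (n * lam) • 1)⁻¹ * L * (L + (n * lam) • 1)⁻¹).trace /
          Real.sqrt ((K * (K + (n * lam) • 1)⁻¹ * K * (K + (n * lam) • 1)⁻¹).trace *
            (L * (L + (n * lam) • 1)⁻¹ * L * (L + (n * lam) • 1)⁻¹).trace))
      atTop (nhds ((K * L).trace / Real.sqrt ((K * K).trace * (L * L).trace))) := by
  have hnpos : (0 : ℝ) < n := by exact_mod_cast hn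
  constructor
  · intro lam hlam
    have hc : 0 < (n : ℝ) * lam := mul_pos hnpos hlam
    exact Real.sqrt_pos.mpr
      (mul_pos (Stmt17Aux.trace_pos K hK hK0 hc) (Stmt17Aux.trace_pos L hL hL0 hc))
  · have hBK := Stmt17Aux.tendsto_B hn K
    have hBL := Stmt17Aux.tendsto_B hn L
    have htr : ∀ X Y : Matrix (Fin n) (Fin n) ℝ,
        Continuous fun p : Matrix (Fin n) (Fin n) ℝ × Matrix (Fin n) (Fin n) ℝ =>
          (X * p.1 * Y * p.2).trace := fun X Y =>
      (((continuous_const.matrix_mul continuous_fst).matrix_mul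
        continuous_const).matrix_mul continuous_snd).matrix_trace
    have hN : Tendsto (fun lam : ℝ =>
        (K * (((n : ℝ) * lam)⁻¹ • K + 1)⁻¹ * L * (((n : ℝ) * lam)⁻¹ • L + 1)⁻¹).trace)
        atTop (nhds ((K * L).trace)) := by
      have := ((htr K L).tendsto (1, 1)).comp (hBK.prodMk_nhds hBL)
      simpa [Function.comp_def] using this
    have hDK : Tendsto (fun lam : ℝ =>
        (K * (((n : ℝ) * lam)⁻¹ • K + 1)⁻¹ * K * (((n : ℝ) * lam)⁻¹ • K + 1)⁻¹).trace)
        atTop (nhds ((K * K).trace)) := by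
      have := ((htr K K).tendsto (1, 1)).comp (hBK.prodMk_nhds hBK)
      simpa [Function.comp_def] using this
    have hDL : Tendsto (fun lam : ℝ =>
        (L * (((n : ℝ) * lam)⁻¹ • L + 1)⁻¹ * L * (((n : ℝ) * lam)⁻¹ • L + 1)⁻¹).trace)
        atTop (nhds ((L * L).trace)) := by
      have := ((htr L L).tendsto (1, 1)).comp (hBL.prodMk_nhds hBL)
      simpa [Function.comp_def] using this
    have hD : Tendsto (fun lam : ℝ => Real.sqrt
        ((K * (((n : ℝ) * lam)⁻¹ • K + 1)⁻¹ * K * (((n : ℝ) * lam)⁻¹ • K + 1)⁻¹).trace *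
          (L * (((n : ℝ) * lam)⁻¹ • L + 1)⁻¹ * L * (((n : ℝ) * lam)⁻¹ • L + 1)⁻¹).trace))
        atTop (nhds (Real.sqrt ((K * K).trace * (L * L).trace))) :=
      (Real.continuous_sqrt.tendsto _).comp (hDK.mul hDL)
    have hKpos : 0 < (K * K).trace :=
      Stmt17Aux.trace_sq_pos K (Stmt17Aux.transpose_eq K hK) hK0
    have hLpos : 0 < (L * L).trace :=
      Stmt17Aux.trace_sq_pos L (Stmt17Aux.transpose_eq L hL) hL0
    have hne : Real.sqrt ((K * K).trace * (L * L).trace) ≠ 0 :=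
      (Real.sqrt_pos.mpr (mul_pos hKpos hLpos)).ne'
    have hQ := hN.div hD hne
    refine Tendsto.congr' ?_ hQ
    filter_upwards [eventually_gt_atTop (0 : ℝ)] with lam hlam
    have hc : 0 < (n : ℝ) * lam := mul_pos hnpos hlam
    have hsK := (Stmt17Aux.scale_inv K hK hc).symm
    have hsL := (Stmt17Aux.scale_inv L hL hc).symm
    have e : ∀ X A Y B : Matrix (Fin n) (Fin n) ℝ,
        (X * (((n : ℝ) * lam) • A) * Y * (((n : ℝ) * lam) • B)).trace =
          (((n : ℝ) * lam) * ((n : ℝ) * lam)) * (X * A * Y * B).trace := by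
      intro X A Y B
      simp only [Matrix.mul_smul, Matrix.smul_mul, Matrix.trace_smul, smul_eq_mul]
      ring
    simp only [Pi.div_apply]
    rw [hsK, hsL, e, e, e,
      show (((n : ℝ) * lam) * ((n : ℝ) * lam) *
            (K * (K + ((n : ℝ) * lam) • 1)⁻¹ * K * (K + ((n : ℝ) * lam) • 1)⁻¹).trace) *
          (((n : ℝ) * lam) * ((n : ℝ) * lam) *
            (L * (L + ((n : ℝ) * lam) • 1)⁻¹ * L * (L + ((n : ℝ) * lam) • 1)⁻¹).trace) =
          (((n : ℝ) * lam) * ((n : ℝ) * lam)) ^ 2 *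
            ((K * (K + ((n : ℝ) * lam) • 1)⁻¹ * K * (K + ((n : ℝ) * lam) • 1)⁻¹).trace *
              (L * (L + ((n : ℝ) * lam) • 1)⁻¹ * L * (L + ((n : ℝ) * lam) • 1)⁻¹).trace)
        from by ring,
      Real.sqrt_mul (sq_nonneg _), Real.sqrt_sq (mul_pos hc hc).le,
      mul_div_mul_left _ _ (mul_pos hc hc).ne']
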